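/- Let q ≥ 2 and h, N, k be positive integers and V ≥ 0 a real number. Let A : Matrix (Fin h) (Fin N) (ZMod q). Let x_1, …, x_k : Fin N → ℤ with ‖x_i‖ ≤ (V / √(k/2)) · √N for every i, let τ : Fin k → ℕ, let m : Fin k → ℤ with m i ∈ {0, 1} for every i, and set x := Σ_{i=1}^{k} (−1)^{τ i} · (m i) · x_i. Suppose e* : Fin N → ℤ satisfies ‖e*‖ ≤ 2kV·√(2kN), e* ≠ x, and A·e* = A·x (equality in (ZMod q)^h). Then the vector e₀ := e* − x satisfies: e₀ ≠ 0, A·e₀ = 0 in (ZMod q)^h, and ‖e₀‖ ≤ 4kV·√(2kN); that is, e₀ is a valid solution to the SIS_{q,h,N,β} problem for A with bound β = 4kV·√(2kN). -/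

import Mathlib

noncomputable def intEucNorm {N : ℕ} (e : Fin N → ℤ) : ℝ :=
  Real.sqrt (∑ i, ((e i : ℝ)) ^ 2)

noncomputable def toE {N : ℕ} (e : Fin N → ℤ) : EuclideanSpace ℝ (Fin N) :=
  WithLp.toLp 2 (fun i => (e i : ℝ))

lemma intEucNorm_eq_norm {N : ℕ} (e : Fin N → ℤ) : intEucNorm e = ‖toE e‖ := by
  rw [EuclideanSpace.norm_eq, intEucNorm]
  congr 1; apply Finset.sum_congr rfl; intro i _
  rw [Real.norm_eq_abs, sq_abs]; rfl

/-- Core extraction step of the unforgeability reduction: a forged signature `e*`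
satisfying the verification equation and norm bound, with `e* ≠ x` for the known
preimage `x = ∑_i (−1)^{τ i} (m i) x_i`, yields a nonzero short SIS solution
`e₀ = e* − x` with `A·e₀ ≡ 0 (mod q)` and `‖e₀‖ ≤ 4kV√(2kN)`. -/
theorem forgery_gives_sis_solution (q h N k : ℕ) (hq : 2 ≤ q) (hh : 0 < h)
    (hN : 0 < N) (hk : 0 < k) (V : ℝ) (hV : 0 ≤ V)
    (A : Matrix (Fin h) (Fin N) (ZMod q))
    (x : Fin k → Fin N → ℤ)
    (hx : ∀ i, intEucNorm (x i) ≤ (V / Real.sqrt ((k : ℝ) / 2)) * Real.sqrt (N : ℝ))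
    (τ : Fin k → ℕ) (m : Fin k → ℤ) (hm : ∀ i, m i = 0 ∨ m i = 1)
    (estar : Fin N → ℤ)
    (hnorm : intEucNorm estar ≤ 2 * k * V * Real.sqrt (2 * k * N))
    (hne : estar ≠ ∑ i : Fin k, ((-1 : ℤ) ^ τ i * m i) • x i)
    (heq : A.mulVec (fun j => (estar j : ZMod q))
      = A.mulVec (fun j =>
          (((∑ i : Fin k, ((-1 : ℤ) ^ τ i * m i) • x i) j : ℤ) : ZMod q))) :
    (estar - ∑ i : Fin k, ((-1 : ℤ) ^ τ i * m i) • x i) ≠ 0 ∧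
    A.mulVec (fun j =>
        (((estar - ∑ i : Fin k, ((-1 : ℤ) ^ τ i * m i) • x i) j : ℤ) : ZMod q)) = 0 ∧
    intEucNorm (estar - ∑ i : Fin k, ((-1 : ℤ) ^ τ i * m i) • x i)
      ≤ 4 * k * V * Real.sqrt (2 * k * N) := by
  set xs := ∑ i : Fin k, ((-1 : ℤ) ^ τ i * m i) • x i with hxs
  refine ⟨sub_ne_zero.mpr hne, ?_, ?_⟩
  · have : (fun j => (((estar - xs) j : ℤ) : ZMod q))
        = (fun j => (estar j : ZMod q)) - (fun j => ((xs j : ℤ) : ZMod q)) := by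
      funext j; simp [Pi.sub_apply]
    rw [this, Matrix.mulVec_sub, heq, sub_self]
  · -- norm bound
    have hk1 : (1 : ℝ) ≤ k := by exact_mod_cast hk
    have hkpos : (0 : ℝ) < k := by linarith
    have hsq : Real.sqrt ((k : ℝ) / 2) > 0 := Real.sqrt_pos.mpr (by linarith)
    -- key: k * (V / √(k/2) * √N) = V * √(2kN)
    have hkey : (k : ℝ) * ((V / Real.sqrt ((k : ℝ) / 2)) * Real.sqrt (N : ℝ))
        = V * Real.sqrt (2 * k * N) := by
      have h1 : Real.sqrt ((k:ℝ)/2) * Real.sqrt ((k:ℝ)/2) = (k:ℝ)/2 :=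
        Real.mul_self_sqrt (by linarith)
      have h2 : Real.sqrt (2 * k * N) = 2 * Real.sqrt ((k:ℝ)/2) * Real.sqrt (N:ℝ) := by
        rw [show (2 * k * N : ℝ) = (2 * Real.sqrt ((k:ℝ)/2) * Real.sqrt (N:ℝ))^2 by
          have hN' : Real.sqrt (N:ℝ) * Real.sqrt (N:ℝ) = (N:ℝ) :=
            Real.mul_self_sqrt (Nat.cast_nonneg N)
          nlinarith]
        exact Real.sqrt_sq (by positivity)
      have hkk : Real.sqrt (k:ℝ) * Real.sqrt (k:ℝ) = (k:ℝ) :=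
        Real.mul_self_sqrt (le_of_lt hkpos)
      have h22 : Real.sqrt (2:ℝ) * Real.sqrt (2:ℝ) = 2 := Real.mul_self_sqrt (by norm_num)
      rw [h2]
      field_simp
      linear_combination (-(2 * V)) * h1
    -- norm of xs
    have hxsnorm : intEucNorm xs ≤ V * Real.sqrt (2 * k * N) := by
      rw [intEucNorm_eq_norm]
      have htoE : toE xs = ∑ i : Fin k, ((((-1 : ℤ) ^ τ i * m i : ℤ) : ℝ)) • toE (x i) := by
        ext j
        have hR : (∑ i : Fin k, ((((-1 : ℤ) ^ τ i * m i : ℤ)) : ℝ) • toE (x i)) j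
            = ∑ i : Fin k, ((((-1 : ℤ) ^ τ i * m i : ℤ)) : ℝ) * ((x i j : ℤ) : ℝ) :=
          by simp [toE]
        have hL : toE xs j
            = ∑ i : Fin k, ((((-1 : ℤ) ^ τ i * m i : ℤ)) : ℝ) * ((x i j : ℤ) : ℝ) := by
          simp only [toE, hxs, Finset.sum_apply, Pi.smul_apply, smul_eq_mul]
          push_cast; ring
        rw [hL, hR]
      rw [htoE]
      calc ‖∑ i : Fin k, ((((-1 : ℤ) ^ τ i * m i : ℤ) : ℝ)) • toE (x i)‖
          ≤ ∑ i : Fin k, ‖((((-1 : ℤ) ^ τ i * m i : ℤ) : ℝ)) • toE (x i)‖ :=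
            norm_sum_le _ _
        _ ≤ ∑ i : Fin k, (V / Real.sqrt ((k : ℝ) / 2)) * Real.sqrt (N : ℝ) := by
            apply Finset.sum_le_sum
            intro i _
            rw [norm_smul]
            have h1 : ‖(((-1 : ℤ) ^ τ i * m i : ℤ) : ℝ)‖ ≤ 1 := by
              rcases hm i with h | h <;> simp [h, abs_pow]
            have h2 : ‖toE (x i)‖ ≤ (V / Real.sqrt ((k : ℝ) / 2)) * Real.sqrt (N : ℝ) := by
              rw [← intEucNorm_eq_norm]; exact hx i
            calc ‖(((-1 : ℤ) ^ τ i * m i : ℤ) : ℝ)‖ * ‖toE (x i)‖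
                ≤ 1 * ‖toE (x i)‖ :=
                  mul_le_mul_of_nonneg_right h1 (norm_nonneg _)
              _ = ‖toE (x i)‖ := one_mul _
              _ ≤ _ := h2
        _ = (k : ℝ) * ((V / Real.sqrt ((k : ℝ) / 2)) * Real.sqrt (N : ℝ)) := by
            simp [Finset.sum_const, mul_comm]
        _ = V * Real.sqrt (2 * k * N) := hkey
    have htri : intEucNorm (estar - xs) ≤ intEucNorm estar + intEucNorm xs := by
      rw [intEucNorm_eq_norm, intEucNorm_eq_norm, intEucNorm_eq_norm]
      have : toE (estar - xs) = toE estar - toE xs := by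
        ext j; simp [toE, Pi.sub_apply]
      rw [this]; exact norm_sub_le _ _
    have hsqrtnn : (0:ℝ) ≤ Real.sqrt (2 * k * N) := Real.sqrt_nonneg _
    nlinarith [mul_nonneg hV hsqrtnn]
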